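/- For every integer k ≥ 3, the set 𝒫 = ⋃_{n=0}^∞ P_n satisfies the defining property of the P-positions: for every position u, u ∈ 𝒫 if and only if every follower of u lies outside 𝒫. -/

import Mathlib

/-- `T n` is the `n`-th triangular number `n(n+1)/2`. -/
def T (n : ℕ) : ℕ := n * (n + 1) / 2

/-- `Pset k n` is the set `Pₙ` of positions `(T n, m₁, …, m_{k-1})` (nondecreasing
`k`-tuples) whose first component is `T n` and whose remaining components sum to
`(k-1)·T n + n` (each of them is automatically `≥ T n` by monotonicity). -/
def Pset (k : ℕ) [NeZero k] (n : ℕ) : Set (Fin k → ℕ) :=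
  {u | Monotone u ∧ u 0 = T n ∧
    ∑ i ∈ Finset.univ.erase 0, u i = (k - 1) * T n + n}

/-- A raw move of the `k`-heap game (before re-sorting): either (i) remove a positive
number of tokens from at least one and at most `k-1` heaps, or (ii) remove the same
positive number `t` of tokens from all `k` heaps (`t` at most the smallest heap). -/
def MoveRaw (k : ℕ) (u w : Fin k → ℕ) : Prop :=
  ((∀ i, w i ≤ u i) ∧ u ≠ w ∧
    (Finset.univ.filter fun i => w i < u i).card ≤ k - 1)
  ∨ (∃ t > 0, ∀ i, u i = w i + t)

/-- `v` is a follower of `u`: `v` is obtained from `u` by one move, with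
the components re-sorted into nondecreasing order. -/
def Follower (k : ℕ) (u v : Fin k → ℕ) : Prop :=
  ∃ w : Fin k → ℕ, MoveRaw k u w ∧ Monotone v ∧ ∃ σ : Equiv.Perm (Fin k), v = w ∘ σ

lemma sum_sub_const {k : ℕ} (S : Finset (Fin k)) (f : Fin k → ℕ) (c : ℕ)
    (h : ∀ i ∈ S, c ≤ f i) :
    ∑ i ∈ S, (f i - c) + S.card * c = ∑ i ∈ S, f i := by
  have : ∑ i ∈ S, (f i - c) + S.card * c = ∑ i ∈ S, ((f i - c) + c) := by
    rw [Finset.sum_add_distrib, Finset.sum_const, smul_eq_mul]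
  rw [this]
  exact Finset.sum_congr rfl fun i hi => Nat.sub_add_cancel (h i hi)

lemma card_erase_zero (k : ℕ) [NeZero k] :
    (Finset.univ.erase (0 : Fin k)).card = k - 1 := by
  rw [Finset.card_erase_of_mem (Finset.mem_univ _)]; simp

lemma perm_facts {k : ℕ} [NeZero k] (w v : Fin k → ℕ) (σ : Equiv.Perm (Fin k))
    (hv : Monotone v) (he : v = w ∘ σ) :
    (∀ j, v 0 ≤ w j) ∧ (∃ j, v 0 = w j) ∧ ∑ i, v i = ∑ i, w i := by
  refine ⟨fun j => ?_, ⟨σ 0, by rw [he]; rfl⟩, by rw [he]; exact Equiv.sum_comp σ w⟩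
  have : w j = v (σ.symm j) := by rw [he]; simp
  rw [this]
  exact hv (Fin.zero_le _)

lemma mem_Pset_iff {k : ℕ} [NeZero k] (m : ℕ) (v : Fin k → ℕ) (hv : Monotone v) :
    v ∈ Pset k m ↔ v 0 = T m ∧ ∑ i, v i = T m + ((k - 1) * T m + m) := by
  have hsplit := Finset.add_sum_erase Finset.univ v (Finset.mem_univ 0)
  constructor
  · rintro ⟨_, h0, hs⟩
    exact ⟨h0, by rw [← hsplit, h0, hs]⟩
  · rintro ⟨h0, hs⟩
    refine ⟨hv, h0, ?_⟩
    rw [← hsplit, h0] at hs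
    omega

lemma build {k : ℕ} [NeZero k] (m : ℕ) (w : Fin k → ℕ) (hlb : ∀ i, T m ≤ w i)
    (hmin : ∃ j, w j = T m) (hsum : ∑ i, w i = T m + ((k - 1) * T m + m)) :
    ∃ v, Monotone v ∧ (∃ σ : Equiv.Perm (Fin k), v = w ∘ σ) ∧ v ∈ Pset k m := by
  set v := w ∘ Tuple.sort w with hv
  have hmono : Monotone v := Tuple.monotone_sort w
  obtain ⟨hle, ⟨j0, hj0⟩, hsumv⟩ := perm_facts w v (Tuple.sort w) hmono rfl
  obtain ⟨j, hj⟩ := hmin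
  have h0 : v 0 = T m := le_antisymm (hj ▸ hle j) (hj0 ▸ hlb j0)
  exact ⟨v, hmono, ⟨Tuple.sort w, rfl⟩, (mem_Pset_iff m v hmono).2 ⟨h0, hsumv.trans hsum⟩⟩

lemma Pset_ub {k : ℕ} [NeZero k] (m : ℕ) (v : Fin k → ℕ)
    (h : v ∈ Pset k m) : ∀ i, v i ≤ T m + m := by
  obtain ⟨hv, h0, hs⟩ := h
  intro i
  rcases eq_or_ne i 0 with rfl | hi
  · omega
  · have hi' : i ∈ Finset.univ.erase 0 := Finset.mem_erase.2 ⟨hi, Finset.mem_univ _⟩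
    have hge : ∀ j ∈ Finset.univ.erase (0 : Fin k), T m ≤ v j := fun j _ =>
      h0 ▸ hv (Fin.zero_le j)
    have hsub := sum_sub_const _ v (T m) hge
    have hone : v i - T m ≤ ∑ j ∈ Finset.univ.erase 0, (v j - T m) :=
      Finset.single_le_sum (f := fun j => v j - T m) (fun j _ => Nat.zero_le _) hi'
    have hgei := hge i hi'
    rw [card_erase_zero, hs] at hsub
    set A := (k - 1) * T m with hA
    omega

lemma two_T (n : ℕ) : 2 * T n = n * (n + 1) := by
  unfold T
  rw [Nat.mul_div_cancel']
  exact even_iff_two_dvd.mp (Nat.even_mul_succ_self n)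

lemma T_succ (n : ℕ) : T (n + 1) = T n + n + 1 := by
  have h1 := two_T n; have h2 := two_T (n + 1); nlinarith

lemma T_lt_T {m n : ℕ} (h : m < n) : T m < T n := by
  have h1 := two_T m; have h2 := two_T n; nlinarith

lemma T_le_T {m n : ℕ} (h : m ≤ n) : T m ≤ T n := by
  rcases eq_or_lt_of_le h with rfl | h
  · rfl
  · exact (T_lt_T h).le

lemma le_T (n : ℕ) : n ≤ T n := by
  have := two_T n; nlinarith

theorem forward (k : ℕ) [NeZero k] (hk : 3 ≤ k)
    (u : Fin k → ℕ) (hu : Monotone u) (hmem : u ∈ ⋃ n, Pset k n)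
    (v : Fin k → ℕ) (hf : Follower k u v) : v ∉ ⋃ n, Pset k n := by
  intro hvmem
  rw [Set.mem_iUnion] at hmem hvmem
  obtain ⟨n, hn⟩ := hmem
  obtain ⟨m, hm⟩ := hvmem
  obtain ⟨w, hmove, hvmono, σ, hvw⟩ := hf
  obtain ⟨hle0, ⟨j0, hj0⟩, hsumvw⟩ := perm_facts w v σ hvmono hvw
  have hub := Pset_ub m v hm
  have hu0 : u 0 = T n := hn.2.1
  have hv0 : v 0 = T m := hm.2.1
  have husum : ∑ i, u i = T n + ((k - 1) * T n + n) := ((mem_Pset_iff n u hu).1 hn).2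
  have hvsum : ∑ i, v i = T m + ((k - 1) * T m + m) := ((mem_Pset_iff m v hvmono).1 hm).2
  rcases hmove with ⟨hle, hne, hcard⟩ | ⟨t, ht, hwt⟩
  · have hmn : m ≤ n := by
      have h1 : T m ≤ w 0 := hv0 ▸ hle0 0
      have h2 : w 0 ≤ u 0 := hle 0
      by_contra h
      push_neg at h
      have := T_lt_T h
      omega
    obtain ⟨j, hj⟩ : ∃ j, w j = u j := by
      by_contra hall
      push_neg at hall
      have heq : Finset.univ.filter (fun i => w i < u i) = Finset.univ := by
        ext i
        simp [lt_of_le_of_ne (hle i) (hall i)]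
      rw [heq, Finset.card_univ, Fintype.card_fin] at hcard
      omega
    have hujub : u j ≤ T m + m := by
      have h1 : v (σ.symm j) = u j := by rw [hvw]; simp [hj]
      rw [← h1]
      exact hub _
    have hTnuj : T n ≤ u j := hu0 ▸ hu (Fin.zero_le j)
    have hmeqn : m = n := by
      by_contra h
      have hmlt : m < n := lt_of_le_of_ne hmn h
      have h1 := T_succ m
      have h2 := T_le_T (show m + 1 ≤ n by omega)
      omega
    subst hmeqn
    have hlt : ∑ i, w i < ∑ i, u i := by
      obtain ⟨i0, hi0⟩ : ∃ i, w i < u i := by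
        by_contra hall
        push_neg at hall
        exact hne (funext fun i => le_antisymm (hall i) (hle i))
      exact Finset.sum_lt_sum (fun i _ => hle i) ⟨i0, Finset.mem_univ i0, hi0⟩
    rw [← hsumvw, hvsum, husum] at hlt
    exact absurd hlt (lt_irrefl _)
  · have hw0 : v 0 = w 0 := by
      refine le_antisymm (hle0 0) ?_
      rw [hj0]
      have h1 := hwt 0
      have h2 := hwt j0
      have h3 := hu (Fin.zero_le j0)
      omega
    have hTm : T m + t = T n := by
      rw [← hu0, hwt 0, ← hw0, hv0]
    have hmlt : m < n := by
      by_contra h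
      push_neg at h
      have := T_le_T h
      omega
    have hsum2 : ∑ i, u i = ∑ i, w i + k * t := by
      calc ∑ i, u i = ∑ i, (w i + t) := Finset.sum_congr rfl fun i _ => hwt i
      _ = ∑ i, w i + k * t := by
        rw [Finset.sum_add_distrib, Finset.sum_const, Finset.card_univ, Fintype.card_fin,
          smul_eq_mul]
    rw [husum, ← hsumvw, hvsum] at hsum2
    have e1 : (k - 1) * T n = (k - 1) * T m + (k - 1) * t := by rw [← hTm, Nat.mul_add]
    have e2 : k * t = (k - 1) * t + t := by
      obtain ⟨k', rfl⟩ : ∃ k', k = k' + 1 := ⟨k - 1, by omega⟩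
      rw [Nat.add_sub_cancel, Nat.add_mul, one_mul]
    set A := (k - 1) * T n
    set B := (k - 1) * T m
    set C := (k - 1) * t
    set D := k * t
    omega

lemma fill {ι : Type*} [DecidableEq ι] (S : Finset ι) (g : ι → ℕ) (c : ℕ)
    (hc : c ≤ ∑ i ∈ S, g i) :
    ∃ f : ι → ℕ, (∀ i, f i ≤ g i) ∧ ∑ i ∈ S, f i = c := by
  induction S using Finset.induction generalizing c with
  | empty =>
    simp only [Finset.sum_empty, Nat.le_zero] at hc
    exact ⟨fun _ => 0, fun _ => Nat.zero_le _, by simp [hc]⟩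
  | @insert a S ha ih =>
    rw [Finset.sum_insert ha] at hc
    obtain ⟨f, hf, hfs⟩ := ih (c := c - min c (g a)) (by omega)
    refine ⟨Function.update f a (min c (g a)), ?_, ?_⟩
    · intro i
      rcases eq_or_ne i a with rfl | hi
      · simp [Function.update_self]
      · simp [Function.update_of_ne hi, hf i]
    · rw [Finset.sum_insert ha, Function.update_self]
      have : ∑ x ∈ S, Function.update f a (min c (g a)) x = ∑ x ∈ S, f x :=
        Finset.sum_congr rfl fun i hi =>
          Function.update_of_ne (by rintro rfl; exact ha hi) _ _
      rw [this, hfs]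
      omega

theorem backward (k : ℕ) [NeZero k] (hk : 3 ≤ k)
    (u : Fin k → ℕ) (hu : Monotone u) (hnot : u ∉ ⋃ n, Pset k n) :
    ∃ v, Follower k u v ∧ v ∈ ⋃ n, Pset k n := by
  classical
  set n := Nat.findGreatest (fun n => T n ≤ u 0) (u 0) with hndef
  have hTn : T n ≤ u 0 := Nat.findGreatest_spec (P := fun n => T n ≤ u 0) (Nat.zero_le _) (by simp [T])
  have hlt : u 0 < T (n + 1) := by
    by_contra h
    push_neg at h
    have h1 : n + 1 ≤ u 0 := le_trans (le_T (n + 1)) h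
    have h2 := Nat.le_findGreatest (P := fun n => T n ≤ u 0) h1 h
    omega
  have hTnui : ∀ i, T n ≤ u i := fun i => le_trans hTn (hu (Fin.zero_le i))
  have hcard0 : (Finset.univ.erase (0 : Fin k)).card = k - 1 := card_erase_zero k
  have hes : ∑ i ∈ Finset.univ.erase (0 : Fin k), (u i - T n) + (k - 1) * T n
      = ∑ i ∈ Finset.univ.erase (0 : Fin k), u i := by
    rw [← hcard0]
    exact sum_sub_const _ _ _ (fun i _ => hTnui i)
  have hnotP : ∀ m, u 0 = T m →
      ∑ i ∈ Finset.univ.erase (0 : Fin k), u i ≠ (k - 1) * T m + m := by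
    intro m h0 hsum
    exact hnot (Set.mem_iUnion.2 ⟨m, hu, h0, hsum⟩)
  by_cases hcase : (k - 1) * T n + n ≤ ∑ i ∈ Finset.univ.erase (0 : Fin k), u i
  · -- Case 1
    have hEn : n ≤ ∑ i ∈ Finset.univ.erase (0 : Fin k), (u i - T n) := by
      set A := (k - 1) * T n
      omega
    obtain ⟨i1, hi1v⟩ : ∃ i : Fin k, (i : ℕ) = 1 := ⟨⟨1, by omega⟩, rfl⟩
    obtain ⟨i2, hi2v⟩ : ∃ i : Fin k, (i : ℕ) = 2 := ⟨⟨2, by omega⟩, rfl⟩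
    have hi10 : i1 ≠ 0 := by
      intro h; rw [h, Fin.val_zero] at hi1v; omega
    have hi20 : i2 ≠ 0 := by
      intro h; rw [h, Fin.val_zero] at hi2v; omega
    have hi21 : i2 ≠ i1 := by
      intro h; rw [h, hi1v] at hi2v; omega
    have h12 : i1 ≤ i2 := by rw [Fin.le_def, hi1v, hi2v]; omega
    have hi1mem : i1 ∈ Finset.univ.erase (0 : Fin k) :=
      Finset.mem_erase.2 ⟨hi10, Finset.mem_univ _⟩
    have hi2S : i2 ∈ (Finset.univ.erase (0 : Fin k)).erase i1 :=
      Finset.mem_erase.2 ⟨hi21, Finset.mem_erase.2 ⟨hi20, Finset.mem_univ _⟩⟩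
    have hcardS : ((Finset.univ.erase (0 : Fin k)).erase i1).card = k - 2 := by
      rw [Finset.card_erase_of_mem hi1mem, hcard0]
      omega
    have hdec : (u i1 - T n) + ∑ i ∈ (Finset.univ.erase (0 : Fin k)).erase i1, (u i - T n)
        = ∑ i ∈ Finset.univ.erase (0 : Fin k), (u i - T n) :=
      Finset.add_sum_erase _ (fun i => u i - T n) hi1mem
    have hkk : (k - 1) * T n = (k - 2) * T n + T n := by
      have h : k - 1 = k - 2 + 1 := by omega
      rw [h, Nat.add_mul, one_mul]
    by_cases h0 : u 0 = T n
    · -- Subcase (a)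
      have hsne := hnotP n h0
      have hEn' : n < ∑ i ∈ Finset.univ.erase (0 : Fin k), (u i - T n) := by
        set A := (k - 1) * T n
        omega
      obtain ⟨f, hf, hfs⟩ := fill (Finset.univ.erase (0 : Fin k)) (fun i => u i - T n) n hEn
      set w : Fin k → ℕ := fun i => if i = 0 then u 0 else T n + f i with hww
      have hle : ∀ i, w i ≤ u i := by
        intro i
        simp only [hww]
        rcases eq_or_ne i 0 with rfl | hi
        · simp
        · simp only [if_neg hi]
          have := hf i
          have := hTnui i
          omega
      have hlb : ∀ i, T n ≤ w i := by
        intro i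
        simp only [hww]
        rcases eq_or_ne i 0 with rfl | hi
        · simp [h0]
        · simp only [if_neg hi]; omega
      have hminw : ∃ j, w j = T n := ⟨0, by simp only [hww]; simp [h0]⟩
      have hsumw : ∑ i, w i = T n + ((k - 1) * T n + n) := by
        rw [← Finset.add_sum_erase Finset.univ w (Finset.mem_univ 0)]
        have h1 : ∑ i ∈ Finset.univ.erase (0 : Fin k), w i
            = ∑ i ∈ Finset.univ.erase (0 : Fin k), (T n + f i) := by
          refine Finset.sum_congr rfl fun i hi => ?_
          simp only [hww]
          simp [(Finset.mem_erase.1 hi).1]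
        rw [h1, Finset.sum_add_distrib, Finset.sum_const, smul_eq_mul, hcard0, hfs]
        have h2 : w 0 = T n := by simp only [hww]; simp [h0]
        rw [h2]
      obtain ⟨j1, hj1, hj1lt⟩ : ∃ i ∈ Finset.univ.erase (0 : Fin k), f i < u i - T n := by
        by_contra hall
        push_neg at hall
        have := Finset.sum_le_sum hall
        omega
      have hne : u ≠ w := by
        intro h
        have h1 : u j1 = w j1 := congrFun h j1
        simp only [hww] at h1
        simp only [if_neg (Finset.mem_erase.1 hj1).1] at h1
        have := hTnui j1
        omega
      have hcardle : (Finset.univ.filter fun i => w i < u i).card ≤ k - 1 := by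
        have hsub : (Finset.univ.filter fun i => w i < u i) ⊆ Finset.univ.erase 0 := by
          intro i hi
          rcases Finset.mem_filter.1 hi with ⟨_, hlt'⟩
          refine Finset.mem_erase.2 ⟨?_, Finset.mem_univ _⟩
          rintro rfl
          simp only [hww] at hlt'
          simp at hlt'
        calc (Finset.univ.filter fun i => w i < u i).card
            ≤ (Finset.univ.erase (0 : Fin k)).card := Finset.card_le_card hsub
          _ = k - 1 := hcard0
      obtain ⟨v, hvmono, ⟨σ, hvw⟩, hvP⟩ := build n w hlb hminw hsumw
      exact ⟨v, ⟨w, Or.inl ⟨hle, hne, hcardle⟩, hvmono, σ, hvw⟩,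
        Set.mem_iUnion.2 ⟨n, hvP⟩⟩
    · by_cases hb : u i1 ≤ T n + n
      · -- Subcase (b)
        have hfeasb : n - (u i1 - T n) ≤
            ∑ i ∈ (Finset.univ.erase (0 : Fin k)).erase i1, (u i - T n) := by omega
        obtain ⟨f, hf, hfs⟩ := fill ((Finset.univ.erase (0 : Fin k)).erase i1)
          (fun i => u i - T n) (n - (u i1 - T n)) hfeasb
        set w : Fin k → ℕ := fun i => if i = 0 then T n else if i = i1 then u i1 else T n + f i
          with hww
        have hle : ∀ i, w i ≤ u i := by
          intro i
          simp only [hww]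
          rcases eq_or_ne i 0 with rfl | hi
          · simp [hTn]
          · rcases eq_or_ne i i1 with rfl | hi1
            · simp [hi10]
            · simp only [if_neg hi, if_neg hi1]
              have := hf i
              have := hTnui i
              omega
        have hlb : ∀ i, T n ≤ w i := by
          intro i
          simp only [hww]
          rcases eq_or_ne i 0 with rfl | hi
          · simp
          · rcases eq_or_ne i i1 with rfl | hi1
            · simp [hi10, hTnui]
            · simp only [if_neg hi, if_neg hi1]; omega
        have hminw : ∃ j, w j = T n := ⟨0, by simp only [hww]; simp⟩
        have hsumw : ∑ i, w i = T n + ((k - 1) * T n + n) := by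
          rw [← Finset.add_sum_erase Finset.univ w (Finset.mem_univ 0),
            ← Finset.add_sum_erase _ w hi1mem]
          have h1 : ∑ i ∈ (Finset.univ.erase (0 : Fin k)).erase i1, w i
              = ∑ i ∈ (Finset.univ.erase (0 : Fin k)).erase i1, (T n + f i) := by
            refine Finset.sum_congr rfl fun i hi => ?_
            simp only [hww]
            obtain ⟨hine1, hine0'⟩ := Finset.mem_erase.1 hi
            simp [hine1, (Finset.mem_erase.1 hine0').1]
          rw [h1, Finset.sum_add_distrib, Finset.sum_const, smul_eq_mul, hcardS, hfs]
          have h2 : w 0 = T n := by simp only [hww]; simp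
          have h3 : w i1 = u i1 := by simp only [hww]; simp [hi10]
          rw [h2, h3]
          have h4 := hTnui i1
          set A := (k - 1) * T n
          set B := (k - 2) * T n
          omega
        have hne : u ≠ w := by
          intro h
          have h1 : u 0 = w 0 := congrFun h 0
          simp only [hww] at h1
          simp at h1
          exact h0 h1
        have hcardle : (Finset.univ.filter fun i => w i < u i).card ≤ k - 1 := by
          have hsub : (Finset.univ.filter fun i => w i < u i) ⊆ Finset.univ.erase i1 := by
            intro i hi
            rcases Finset.mem_filter.1 hi with ⟨_, hlt'⟩
            refine Finset.mem_erase.2 ⟨?_, Finset.mem_univ _⟩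
            rintro rfl
            simp only [hww] at hlt'
            simp [hi10] at hlt'
          calc (Finset.univ.filter fun i => w i < u i).card
              ≤ (Finset.univ.erase i1).card := Finset.card_le_card hsub
            _ = k - 1 := by rw [Finset.card_erase_of_mem (Finset.mem_univ _)]; simp
        obtain ⟨v, hvmono, ⟨σ, hvw⟩, hvP⟩ := build n w hlb hminw hsumw
        exact ⟨v, ⟨w, Or.inl ⟨hle, hne, hcardle⟩, hvmono, σ, hvw⟩,
          Set.mem_iUnion.2 ⟨n, hvP⟩⟩
      · -- Subcase (c)
        push_neg at hb
        have he0le : u 0 ≤ T n + n := by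
          have := T_succ n
          omega
        have hfeasc : n - (u 0 - T n) ≤
            ∑ i ∈ (Finset.univ.erase (0 : Fin k)).erase i1, (u i - T n) := by
          have h1 : u i2 - T n ≤
              ∑ i ∈ (Finset.univ.erase (0 : Fin k)).erase i1, (u i - T n) :=
            Finset.single_le_sum (f := fun i => u i - T n) (fun i _ => Nat.zero_le _) hi2S
          have h2 : u i1 ≤ u i2 := hu h12
          have h3 := hTnui i1
          omega
        obtain ⟨f, hf, hfs⟩ := fill ((Finset.univ.erase (0 : Fin k)).erase i1)
          (fun i => u i - T n) (n - (u 0 - T n)) hfeasc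
        set w : Fin k → ℕ := fun i => if i = 0 then u 0 else if i = i1 then T n else T n + f i
          with hww
        have hle : ∀ i, w i ≤ u i := by
          intro i
          simp only [hww]
          rcases eq_or_ne i 0 with rfl | hi
          · simp
          · rcases eq_or_ne i i1 with rfl | hi1
            · simp [hi10, hTnui]
            · simp only [if_neg hi, if_neg hi1]
              have := hf i
              have := hTnui i
              omega
        have hlb : ∀ i, T n ≤ w i := by
          intro i
          simp only [hww]
          rcases eq_or_ne i 0 with rfl | hi
          · simp [hTn]
          · rcases eq_or_ne i i1 with rfl | hi1
            · simp [hi10]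
            · simp only [if_neg hi, if_neg hi1]; omega
        have hminw : ∃ j, w j = T n := ⟨i1, by simp only [hww]; simp [hi10]⟩
        have hsumw : ∑ i, w i = T n + ((k - 1) * T n + n) := by
          rw [← Finset.add_sum_erase Finset.univ w (Finset.mem_univ 0),
            ← Finset.add_sum_erase _ w hi1mem]
          have h1 : ∑ i ∈ (Finset.univ.erase (0 : Fin k)).erase i1, w i
              = ∑ i ∈ (Finset.univ.erase (0 : Fin k)).erase i1, (T n + f i) := by
            refine Finset.sum_congr rfl fun i hi => ?_
            simp only [hww]
            obtain ⟨hine1, hine0'⟩ := Finset.mem_erase.1 hi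
            simp [hine1, (Finset.mem_erase.1 hine0').1]
          rw [h1, Finset.sum_add_distrib, Finset.sum_const, smul_eq_mul, hcardS, hfs]
          have h2 : w 0 = u 0 := by simp only [hww]; simp
          have h3 : w i1 = T n := by simp only [hww]; simp [hi10]
          rw [h2, h3]
          set A := (k - 1) * T n
          set B := (k - 2) * T n
          omega
        have hne : u ≠ w := by
          intro h
          have h1 : u i1 = w i1 := congrFun h i1
          simp only [hww] at h1
          simp [hi10] at h1
          omega
        have hcardle : (Finset.univ.filter fun i => w i < u i).card ≤ k - 1 := by
          have hsub : (Finset.univ.filter fun i => w i < u i) ⊆ Finset.univ.erase 0 := by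
            intro i hi
            rcases Finset.mem_filter.1 hi with ⟨_, hlt'⟩
            refine Finset.mem_erase.2 ⟨?_, Finset.mem_univ _⟩
            rintro rfl
            simp only [hww] at hlt'
            simp at hlt'
          calc (Finset.univ.filter fun i => w i < u i).card
              ≤ (Finset.univ.erase (0 : Fin k)).card := Finset.card_le_card hsub
            _ = k - 1 := hcard0
        obtain ⟨v, hvmono, ⟨σ, hvw⟩, hvP⟩ := build n w hlb hminw hsumw
        exact ⟨v, ⟨w, Or.inl ⟨hle, hne, hcardle⟩, hvmono, σ, hvw⟩,
          Set.mem_iUnion.2 ⟨n, hvP⟩⟩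
  · -- Case 2: type (ii) move
    push_neg at hcase
    have hub : (k - 1) * u 0 ≤ ∑ i ∈ Finset.univ.erase (0 : Fin k), u i := by
      have h1 : ∀ i ∈ Finset.univ.erase (0 : Fin k), u 0 ≤ u i :=
        fun i _ => hu (Fin.zero_le i)
      calc (k - 1) * u 0 = (Finset.univ.erase (0 : Fin k)).card * u 0 := by rw [hcard0]
        _ ≤ ∑ i ∈ Finset.univ.erase (0 : Fin k), u i := Finset.card_nsmul_le_sum _ _ _ h1
    set m := ∑ i ∈ Finset.univ.erase (0 : Fin k), u i - (k - 1) * u 0 with hmdef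
    have hmn : m < n := by
      have h1 : (k - 1) * T n ≤ (k - 1) * u 0 := Nat.mul_le_mul_left _ hTn
      set A := (k - 1) * T n
      set B := (k - 1) * u 0
      omega
    have hTmlt : T m < u 0 := lt_of_lt_of_le (T_lt_T hmn) hTn
    have htle : ∀ i, u 0 - T m ≤ u i := fun i =>
      le_trans (by omega) (hu (Fin.zero_le i))
    set w : Fin k → ℕ := fun i => u i - (u 0 - T m) with hww
    have hmove : MoveRaw k u w :=
      Or.inr ⟨u 0 - T m, by omega, fun i => by simp only [hww]; exact (Nat.sub_add_cancel (htle i)).symm⟩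
    have hwmono : Monotone w := by
      intro i j hij
      simp only [hww]
      exact Nat.sub_le_sub_right (hu hij) _
    have hw0 : w 0 = T m := by simp only [hww]; omega
    have hwsum : ∑ i ∈ Finset.univ.erase (0 : Fin k), w i = (k - 1) * T m + m := by
      have h1 : ∑ i ∈ Finset.univ.erase (0 : Fin k), w i
          = ∑ i ∈ Finset.univ.erase (0 : Fin k), (u i - (u 0 - T m)) := by
        refine Finset.sum_congr rfl fun i _ => ?_
        simp only [hww]
      have h2 : ∑ i ∈ Finset.univ.erase (0 : Fin k), (u i - (u 0 - T m))
          + (k - 1) * (u 0 - T m) = ∑ i ∈ Finset.univ.erase (0 : Fin k), u i := by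
        rw [← hcard0]
        exact sum_sub_const _ _ _ (fun i _ => htle i)
      have h3 : (k - 1) * (u 0 - T m) + (k - 1) * T m = (k - 1) * u 0 := by
        rw [← Nat.mul_add]
        congr 1
        omega
      rw [h1]
      set A := (k - 1) * (u 0 - T m)
      set B := (k - 1) * T m
      set C := (k - 1) * u 0
      omega
    refine ⟨w, ⟨w, hmove, hwmono, 1, by ext i; simp⟩, Set.mem_iUnion.2 ⟨m, hwmono, hw0, hwsum⟩⟩

/-- For every `k ≥ 3`, the set `𝒫 = ⋃ n, Pₙ` satisfies the defining
property of the P-positions: a position is in `𝒫` iff every follower of it lies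
outside `𝒫`. -/
theorem union_Pset_is_P_set (k : ℕ) [NeZero k] (hk : 3 ≤ k)
    (u : Fin k → ℕ) (hu : Monotone u) :
    (u ∈ ⋃ n, Pset k n) ↔ ∀ v, Follower k u v → v ∉ ⋃ n, Pset k n := by
  constructor
  · intro hmem v hf
    exact forward k hk u hu hmem v hf
  · intro h
    by_contra hnot
    obtain ⟨v, hfv, hvmem⟩ := backward k hk u hu hnot
    exact h v hfv hvmem
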